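/- For d ≡ 3 (mod 4), the number of tuples (a_0,...,a_{d-1}) ∈ {1,-1}^d such that both 1 and -1 are roots of x^d + a_{d-1}x^{d-1} + ... + a_0 equals C((d+1)/2, (d+1)/4) · C((d-1)/2, (d+1)/4). -/

import Mathlib

open Polynomial

-- count of even numbers below n
private lemma aux_card_even (n : ℕ) :
    ((Finset.range n).filter (fun i => i % 2 = 0)).card = (n + 1) / 2 := by
  induction n with
  | zero => simp
  | succ n ih =>
    rw [Finset.range_add_one, Finset.filter_insert]
    by_cases h : n % 2 = 0
    · rw [if_pos h, Finset.card_insert_of_notMem (by simp), ih]; omega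
    · rw [if_neg h, ih]; omega

private lemma aux_card_even_fin (n : ℕ) :
    ((Finset.univ : Finset (Fin n)).filter (fun i : Fin n => (i : ℕ) % 2 = 0)).card = (n + 1) / 2 := by
  rw [← aux_card_even n]
  apply Finset.card_bij (fun (i : Fin n) _ => (i : ℕ))
  · intro a ha
    simp only [Finset.mem_filter, Finset.mem_univ, true_and] at ha
    simp only [Finset.mem_filter, Finset.mem_range]
    exact ⟨a.isLt, ha⟩
  · intro a _ b _ h; exact Fin.val_injective h
  · intro b hb
    simp only [Finset.mem_filter, Finset.mem_range] at hb
    exact ⟨⟨b, hb.1⟩, by simp [hb.2], rfl⟩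

private lemma aux_card_odd_fin (n : ℕ) :
    ((Finset.univ : Finset (Fin n)).filter (fun i : Fin n => ¬ (i : ℕ) % 2 = 0)).card = n / 2 := by
  have h := Finset.card_filter_add_card_filter_not
    (s := (Finset.univ : Finset (Fin n))) (fun i : Fin n => (i : ℕ) % 2 = 0)
  rw [aux_card_even_fin] at h
  simp only [Finset.card_univ, Fintype.card_fin] at h
  omega

private lemma aux_sum_pm {n : ℕ} (F : Finset (Fin n)) (a : Fin n → ℤ)
    (ha : ∀ i, a i = 1 ∨ a i = -1) :
    ∑ i ∈ F, a i = 2 * ((F.filter (fun i => a i = 1)).card : ℤ) - (F.card : ℤ) := by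
  classical
  rw [← Finset.sum_filter_add_sum_filter_not F (fun i => a i = 1)]
  have h1 : ∑ i ∈ F.filter (fun i => a i = 1), a i
      = ((F.filter (fun i => a i = 1)).card : ℤ) := by
    rw [Finset.sum_congr rfl (fun i hi => (Finset.mem_filter.mp hi).2),
      Finset.sum_const, nsmul_eq_mul, mul_one]
  have h2 : ∑ i ∈ F.filter (fun i => ¬ a i = 1), a i
      = -((F.filter (fun i => ¬ a i = 1)).card : ℤ) := by
    have hall : ∀ i ∈ F.filter (fun i => ¬ a i = 1), a i = -1 := by
      intro i hi
      rcases ha i with h | h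
      · exact absurd h (Finset.mem_filter.mp hi).2
      · exact h
    rw [Finset.sum_congr rfl hall, Finset.sum_const, nsmul_eq_mul, mul_neg_one]
  have h3 := Finset.card_filter_add_card_filter_not
    (s := F) (fun i => a i = 1)
  rw [h1, h2]
  have : ((F.filter (fun i => a i = 1)).card : ℤ)
      + ((F.filter (fun i => ¬ a i = 1)).card : ℤ) = (F.card : ℤ) := by
    exact_mod_cast congrArg (Nat.cast : ℕ → ℤ) h3
  linarith

/-- For `d ≡ 3 (mod 4)`, the number of tuples in `{1,-1}^d` making both `1`
and `-1` roots of `x^d + a_{d-1}x^{d-1} + ... + a_0` equals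
`C((d+1)/2, (d+1)/4) * C((d-1)/2, (d+1)/4)`. -/
theorem stmt_7 (d : ℕ) (hd : d % 4 = 3) :
    Set.ncard {a : Fin d → ℤ | (∀ i, a i = 1 ∨ a i = -1) ∧
      (X ^ d + ∑ i : Fin d, C (a i) * X ^ (i : ℕ)).eval 1 = 0 ∧
      (X ^ d + ∑ i : Fin d, C (a i) * X ^ (i : ℕ)).eval (-1) = 0} =
    ((d + 1) / 2).choose ((d + 1) / 4) * ((d - 1) / 2).choose ((d + 1) / 4) := by
  classical
  obtain ⟨k, rfl⟩ : ∃ k, d = 4 * k + 3 := ⟨d / 4, by omega⟩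
  set d := 4 * k + 3 with hdd
  -- even and odd index sets
  set E : Finset (Fin d) := Finset.univ.filter (fun i => (i : ℕ) % 2 = 0) with hE
  set O : Finset (Fin d) := Finset.univ.filter (fun i => ¬ (i : ℕ) % 2 = 0) with hO
  have hEcard : E.card = 2 * k + 2 := by rw [hE, aux_card_even_fin]; omega
  have hOcard : O.card = 2 * k + 1 := by rw [hO, aux_card_odd_fin]; omega
  -- the set as a finset
  set S : Finset (Fin d → ℤ) :=
    (Fintype.piFinset fun _ : Fin d => ({1, -1} : Finset ℤ)).filter
      (fun a => (X ^ d + ∑ i : Fin d, C (a i) * X ^ (i : ℕ)).eval 1 = 0 ∧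
        (X ^ d + ∑ i : Fin d, C (a i) * X ^ (i : ℕ)).eval (-1) = 0) with hS
  have hset : {a : Fin d → ℤ | (∀ i, a i = 1 ∨ a i = -1) ∧
      (X ^ d + ∑ i : Fin d, C (a i) * X ^ (i : ℕ)).eval 1 = 0 ∧
      (X ^ d + ∑ i : Fin d, C (a i) * X ^ (i : ℕ)).eval (-1) = 0} = ↑S := by
    ext a
    simp [hS, Fintype.mem_piFinset, and_assoc]
  rw [hset, Set.ncard_coe_finset]
  -- characterize membership via cardinalities
  have key : ∀ a : Fin d → ℤ, (∀ i, a i = 1 ∨ a i = -1) →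
      (((X ^ d + ∑ i : Fin d, C (a i) * X ^ (i : ℕ)).eval 1 = 0 ∧
        (X ^ d + ∑ i : Fin d, C (a i) * X ^ (i : ℕ)).eval (-1) = 0) ↔
      ((E.filter (fun i => a i = 1)).card = k + 1 ∧
        (O.filter (fun i => a i = 1)).card = k)) := by
    intro a ha
    have e1 : (X ^ d + ∑ i : Fin d, C (a i) * X ^ (i : ℕ)).eval 1
        = 1 + ∑ i : Fin d, a i := by
      simp [eval_finset_sum]
    have e2 : (X ^ d + ∑ i : Fin d, C (a i) * X ^ (i : ℕ)).eval (-1)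
        = -1 + ∑ i : Fin d, a i * (-1) ^ (i : ℕ) := by
      simp [eval_finset_sum, hdd, pow_succ, pow_mul]
    have split1 : ∑ i : Fin d, a i = ∑ i ∈ E, a i + ∑ i ∈ O, a i := by
      rw [hE, hO, Finset.sum_filter_add_sum_filter_not]
    have split2 : ∑ i : Fin d, a i * (-1) ^ (i : ℕ)
        = ∑ i ∈ E, a i - ∑ i ∈ O, a i := by
      rw [← Finset.sum_filter_add_sum_filter_not Finset.univ
        (fun i : Fin d => (i : ℕ) % 2 = 0) (fun i => a i * (-1) ^ (i : ℕ)), ← hE, ← hO]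
      have hEeq : ∑ i ∈ E, a i * (-1) ^ (i : ℕ) = ∑ i ∈ E, a i := by
        refine Finset.sum_congr rfl (fun i hi => ?_)
        have : (i : ℕ) % 2 = 0 := (Finset.mem_filter.mp hi).2
        rw [(Nat.even_iff.mpr this).neg_one_pow, mul_one]
      have hOeq : ∑ i ∈ O, a i * (-1) ^ (i : ℕ) = -∑ i ∈ O, a i := by
        rw [← Finset.sum_neg_distrib]
        refine Finset.sum_congr rfl (fun i hi => ?_)
        have : ¬ (i : ℕ) % 2 = 0 := (Finset.mem_filter.mp hi).2
        rw [(Nat.odd_iff.mpr (by omega)).neg_one_pow]; ring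
      rw [hEeq, hOeq]; ring
    have sE := aux_sum_pm E a ha
    have sO := aux_sum_pm O a ha
    rw [e1, e2, split1, split2, sE, sO, hEcard, hOcard]
    constructor
    · rintro ⟨h1, h2⟩
      push_cast at h1 h2
      constructor <;> omega
    · rintro ⟨h1, h2⟩
      rw [h1, h2]; push_cast; constructor <;> ring
  -- bijection with pairs of subsets
  have hdisj : ∀ i : Fin d, i ∈ E ↔ i ∉ O := by
    intro i; simp [hE, hO]
  have hcard : S.card = ((E.powersetCard (k + 1)) ×ˢ (O.powersetCard k)).card := by
    refine Finset.card_nbij'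
      (fun a => (E.filter (fun i => a i = 1), O.filter (fun i => a i = 1)))
      (fun p => fun i => if i ∈ p.1 ∪ p.2 then (1 : ℤ) else -1)
      ?_ ?_ ?_ ?_
    · intro a haS
      rw [hS, Finset.mem_coe, Finset.mem_filter, Fintype.mem_piFinset] at haS
      have ha : ∀ i, a i = 1 ∨ a i = -1 := by
        intro i; have := haS.1 i; simpa using this
      obtain ⟨h1, h2⟩ := (key a ha).mp haS.2
      simp only [Finset.mem_coe, Finset.mem_product, Finset.mem_powersetCard]
      exact ⟨⟨Finset.filter_subset _ _, h1⟩, ⟨Finset.filter_subset _ _, h2⟩⟩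
    · intro p hp
      rw [Finset.mem_coe, Finset.mem_product, Finset.mem_powersetCard, Finset.mem_powersetCard] at hp
      obtain ⟨⟨hp1, hc1⟩, hp2, hc2⟩ := hp
      set b : Fin d → ℤ := fun i => if i ∈ p.1 ∪ p.2 then (1 : ℤ) else -1 with hb
      have hbpm : ∀ i, b i = 1 ∨ b i = -1 := by
        intro i; rw [hb]; by_cases h : i ∈ p.1 ∪ p.2 <;> simp [h]
      have hfE : E.filter (fun i => b i = 1) = p.1 := by
        ext i
        simp only [Finset.mem_filter, hb]
        constructor
        · rintro ⟨hiE, hib⟩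
          by_cases h : i ∈ p.1 ∪ p.2
          · rcases Finset.mem_union.mp h with h' | h'
            · exact h'
            · exact absurd (hp2 h') ((hdisj i).mp hiE)
          · rw [if_neg h] at hib; norm_num at hib
        · intro h
          exact ⟨hp1 h, by rw [if_pos (Finset.mem_union_left _ h)]⟩
      have hfO : O.filter (fun i => b i = 1) = p.2 := by
        ext i
        simp only [Finset.mem_filter, hb]
        constructor
        · rintro ⟨hiO, hib⟩
          by_cases h : i ∈ p.1 ∪ p.2
          · rcases Finset.mem_union.mp h with h' | h'
            · exact absurd hiO ((hdisj i).mp (hp1 h'))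
            · exact h'
          · rw [if_neg h] at hib; norm_num at hib
        · intro h
          exact ⟨hp2 h, by rw [if_pos (Finset.mem_union_right _ h)]⟩
      rw [hS, Finset.mem_coe, Finset.mem_filter, Fintype.mem_piFinset]
      refine ⟨fun i => ?_, ?_⟩
      · show b i ∈ ({1, -1} : Finset ℤ)
        rcases hbpm i with h | h <;> rw [h] <;> simp
      exact (key b hbpm).mpr ⟨by rw [hfE, hc1], by rw [hfO, hc2]⟩
    · intro a haS
      rw [hS, Finset.mem_coe, Finset.mem_filter, Fintype.mem_piFinset] at haS
      have ha : ∀ i, a i = 1 ∨ a i = -1 := by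
        intro i; have := haS.1 i; simpa using this
      funext i
      have hiEO : i ∈ E ∪ O := by
        rw [Finset.mem_union, hE, hO]
        simp only [Finset.mem_filter, Finset.mem_univ, true_and]
        exact em _
      rcases ha i with h | h
      · have : i ∈ E.filter (fun j => a j = 1) ∪ O.filter (fun j => a j = 1) := by
          rcases Finset.mem_union.mp hiEO with h' | h'
          · exact Finset.mem_union_left _ (Finset.mem_filter.mpr ⟨h', h⟩)
          · exact Finset.mem_union_right _ (Finset.mem_filter.mpr ⟨h', h⟩)
        simp [this, h]
      · have : i ∉ E.filter (fun j => a j = 1) ∪ O.filter (fun j => a j = 1) := by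
          intro hmem
          rcases Finset.mem_union.mp hmem with h' | h' <;>
          · have := (Finset.mem_filter.mp h').2
            rw [h] at this; norm_num at this
        simp [this, h]
    · intro p hp
      rw [Finset.mem_coe, Finset.mem_product, Finset.mem_powersetCard, Finset.mem_powersetCard] at hp
      obtain ⟨⟨hp1, hc1⟩, hp2, hc2⟩ := hp
      have hfE : E.filter (fun i => (if i ∈ p.1 ∪ p.2 then (1:ℤ) else -1) = 1) = p.1 := by
        ext i
        simp only [Finset.mem_filter]
        constructor
        · rintro ⟨hiE, hib⟩
          by_cases h : i ∈ p.1 ∪ p.2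
          · rcases Finset.mem_union.mp h with h' | h'
            · exact h'
            · exact absurd (hp2 h') ((hdisj i).mp hiE)
          · rw [if_neg h] at hib; norm_num at hib
        · intro h
          exact ⟨hp1 h, by rw [if_pos (Finset.mem_union_left _ h)]⟩
      have hfO : O.filter (fun i => (if i ∈ p.1 ∪ p.2 then (1:ℤ) else -1) = 1) = p.2 := by
        ext i
        simp only [Finset.mem_filter]
        constructor
        · rintro ⟨hiO, hib⟩
          by_cases h : i ∈ p.1 ∪ p.2
          · rcases Finset.mem_union.mp h with h' | h'
            · exact absurd hiO ((hdisj i).mp (hp1 h'))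
            · exact h'
          · rw [if_neg h] at hib; norm_num at hib
        · intro h
          exact ⟨hp2 h, by rw [if_pos (Finset.mem_union_right _ h)]⟩
      rw [Prod.ext_iff]
      exact ⟨hfE, hfO⟩
  rw [hcard, Finset.card_product, Finset.card_powersetCard, Finset.card_powersetCard,
    hEcard, hOcard]
  have h1 : (d + 1) / 2 = 2 * k + 2 := by omega
  have h2 : (d + 1) / 4 = k + 1 := by omega
  have h3 : (d - 1) / 2 = 2 * k + 1 := by omega
  rw [h1, h2, h3]
  congr 1
  rw [← Nat.choose_symm (by omega : k + 1 ≤ 2 * k + 1)]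
  congr 1
  omega
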